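/- In the category of finite paths with edge-preserving co-bijective relations as morphisms, every morphism that is not an isomorphism is a finite composition of prime morphisms (morphisms ⊐ that are not isomorphisms but such that any factorization ⊐ = ⊵ ∘ ⊵' forces ⊵ or ⊵' to be an isomorphism). -/
import Mathlib


namespace PathCat

/-- The edge relation on the standard path `P_n` with vertices `Fin (n+1)`:
`i ⊓ j` iff `|i − j| ≤ 1` (reflexive and symmetric). -/
def AdjF {n : ℕ} (i j : Fin (n + 1)) : Prop := (i : ℕ) ≤ (j : ℕ) + 1 ∧ (j : ℕ) ≤ (i : ℕ) + 1

/-- Edge-preserving relation (as a subset of codomain × domain):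
`⊐ ∘ ⊓ ∘ ⊏ ⊆ ⊓`. -/
def EdgePresRel {m n : ℕ} (R : Fin (n + 1) → Fin (m + 1) → Prop) : Prop :=
  ∀ i j k l, R i k → AdjF k l → R j l → AdjF i j

/-- Co-surjective: every element of the domain is related to something. -/
def CoSurjRel {m n : ℕ} (R : Fin (n + 1) → Fin (m + 1) → Prop) : Prop := ∀ k, ∃ i, R i k

/-- Co-injective: every element of the codomain is the sole image of some element. -/
def CoInjRel {m n : ℕ} (R : Fin (n + 1) → Fin (m + 1) → Prop) : Prop :=
  ∀ i, ∃ k, ∀ i', R i' k ↔ i' = i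

/-- A morphism of the path category `P`: an edge-preserving co-bijective relation
from `P_m` to `P_n` (subset of `P_n × P_m`). -/
def IsMorRel {m n : ℕ} (R : Fin (n + 1) → Fin (m + 1) → Prop) : Prop :=
  EdgePresRel R ∧ CoSurjRel R ∧ CoInjRel R

/-- Relational composition. -/
def compRel {m n l : ℕ} (S : Fin (l + 1) → Fin (n + 1) → Prop)
    (R : Fin (n + 1) → Fin (m + 1) → Prop) : Fin (l + 1) → Fin (m + 1) → Prop :=
  fun a c => ∃ b, S a b ∧ R b c

/-- Isomorphism in the path category. -/
def IsIsoRel {m n : ℕ} (R : Fin (n + 1) → Fin (m + 1) → Prop) : Prop :=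
  IsMorRel R ∧ ∃ S : Fin (m + 1) → Fin (n + 1) → Prop, IsMorRel S ∧
    (∀ a c, compRel R S a c ↔ a = c) ∧ (∀ a c, compRel S R a c ↔ a = c)

/-- Prime morphism: not an isomorphism, but any factorization into two morphisms
forces one factor to be an isomorphism. -/
def IsPrimeRel {m n : ℕ} (R : Fin (n + 1) → Fin (m + 1) → Prop) : Prop :=
  IsMorRel R ∧ ¬ IsIsoRel R ∧
    ∀ (k : ℕ) (S : Fin (n + 1) → Fin (k + 1) → Prop) (T : Fin (k + 1) → Fin (m + 1) → Prop),
      IsMorRel S → IsMorRel T → (∀ a c, R a c ↔ compRel S T a c) → IsIsoRel S ∨ IsIsoRel T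

/-- Edge-injective morphism: on every edge of the domain, the relation restricts to
an injective function with distinct singleton images. -/
def EdgeInjRel {m n : ℕ} (R : Fin (n + 1) → Fin (m + 1) → Prop) : Prop :=
  ∀ k l : Fin (m + 1), AdjF k l → k ≠ l →
    ∃ i j, i ≠ j ∧ (∀ i', R i' k ↔ i' = i) ∧ (∀ j', R j' l ↔ j' = j)

/-- Morphisms of the category `F`: edge-preserving surjective functions. -/
def IsMorF {m n : ℕ} (f : Fin (m + 1) → Fin (n + 1)) : Prop :=
  Function.Surjective f ∧ ∀ a b, AdjF a b → AdjF (f a) (f b)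

/-- Isomorphism in `F`. -/
def IsIsoF {m n : ℕ} (f : Fin (m + 1) → Fin (n + 1)) : Prop :=
  IsMorF f ∧ ∃ g : Fin (n + 1) → Fin (m + 1), IsMorF g ∧
    (∀ a, g (f a) = a) ∧ ∀ b, f (g b) = b

/-- Prime morphism in `F`. -/
def IsPrimeF {m n : ℕ} (f : Fin (m + 1) → Fin (n + 1)) : Prop :=
  IsMorF f ∧ ¬ IsIsoF f ∧
    ∀ (k : ℕ) (g : Fin (k + 1) → Fin (n + 1)) (h : Fin (m + 1) → Fin (k + 1)),
      IsMorF g → IsMorF h → (∀ a, f a = g (h a)) → IsIsoF g ∨ IsIsoF h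

/-- An edge-injective morphism of paths: an edge-preserving surjective function
mapping each edge of the domain onto an edge of the codomain. -/
def IsEdgeInjFun {m n : ℕ} (f : Fin (m + 1) → Fin (n + 1)) : Prop :=
  Function.Surjective f ∧ (∀ a b : Fin (m + 1), AdjF a b → AdjF (f a) (f b)) ∧
    ∀ a b : Fin (m + 1), (a : ℕ) + 1 = (b : ℕ) → f a ≠ f b

/-- The turning number: the number of length-two subpaths mapped onto an edge. -/
noncomputable def turningNumber {m n : ℕ} (f : Fin (m + 1) → Fin (n + 1)) : ℕ :=
  Set.ncard {b : Fin (m + 1) | ∃ a c : Fin (m + 1),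
    (a : ℕ) + 1 = (b : ℕ) ∧ (b : ℕ) + 1 = (c : ℕ) ∧ f a = f c}

/-- Proper function: no restriction to a proper subpath is still surjective. -/
def ProperFun {m n : ℕ} (f : Fin (m + 1) → Fin (n + 1)) : Prop :=
  ∀ a b : Fin (m + 1), a ≤ b → (∀ j, ∃ k, a ≤ k ∧ k ≤ b ∧ f k = j) →
    ((a : ℕ) = 0 ∧ (b : ℕ) = m)

/-- Composite of a chain of morphisms `F i : P_{d i} → P_{d (i+1)}`. -/
def chainComp (d : ℕ → ℕ) (F : ∀ i : ℕ, Fin (d (i + 1) + 1) → Fin (d i + 1) → Prop) :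
    ∀ k : ℕ, Fin (d k + 1) → Fin (d 0 + 1) → Prop
  | 0 => fun a c => a = c
  | k + 1 => fun a c => ∃ b, F k a b ∧ chainComp d F k b c

end PathCat

namespace PathCat

lemma adj_iff_dist {n : ℕ} (i j : Fin (n+1)) : AdjF i j ↔ Nat.dist i j ≤ 1 := by
  simp [AdjF, Nat.dist]; omega

lemma morrel_card_le {m n : ℕ} {R : Fin (n + 1) → Fin (m + 1) → Prop}
    (hR : IsMorRel R) : n ≤ m := by
  obtain ⟨-, -, hinj⟩ := hR
  choose s hs using hinj
  have : Function.Injective s := by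
    intro i i' h
    have h1 : R i (s i) := (hs i i).mpr rfl
    rw [h] at h1
    exact (hs i' i).mp h1
  have := Fintype.card_le_of_injective s this
  simpa using this

lemma morrel_iso_of_le {m n : ℕ} {R : Fin (n + 1) → Fin (m + 1) → Prop}
    (hR : IsMorRel R) (hle : m ≤ n) : IsIsoRel R := by
  have hge := morrel_card_le hR
  have heq : n = m := le_antisymm hge hle
  subst heq
  obtain ⟨hedge, hsurj, hinj⟩ := hR
  choose s hs using hinj
  have hsinj : Function.Injective s := by
    intro i i' h
    have h1 : R i (s i) := (hs i i).mpr rfl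
    rw [h] at h1
    exact (hs i' i).mp h1
  have hssurj : Function.Surjective s := Finite.surjective_of_injective hsinj
  choose f hf using hssurj
  -- ∀ k i', R i' k ↔ i' = f k
  have hfc : ∀ (k : Fin (n+1)) i', R i' k ↔ i' = f k := by
    intro k i'
    have := hs (f k) i'
    rwa [hf k] at this
  have hfsurj : Function.Surjective f := by
    intro i
    refine ⟨s i, ?_⟩
    have : R i (s i) := (hs i i).mpr rfl
    exact ((hfc (s i) i).mp this).symm
  -- f is edge preserving
  have hfe : ∀ k l, AdjF k l → AdjF (f k) (f l) := by
    intro k l h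
    exact hedge (f k) (f l) k l ((hfc k (f k)).mpr rfl) h ((hfc l (f l)).mpr rfl)
  -- f is 1-Lipschitz
  have hlip0 : ∀ t (k l : Fin (n+1)), (l : ℕ) = (k : ℕ) + t → Nat.dist (f k) (f l) ≤ t := by
    intro t
    induction t with
    | zero =>
      intro k l h
      have : k = l := Fin.ext (by omega)
      subst this; simp [Nat.dist]
    | succ t ih =>
      intro k l h
      have hkt : (k : ℕ) + t < n + 1 := by omega
      set l' : Fin (n+1) := ⟨(k : ℕ) + t, hkt⟩ with hl'
      have h1 : Nat.dist (f k) (f l') ≤ t := ih k l' rfl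
      have h2 : Nat.dist (f l') (f l) ≤ 1 := by
        rw [← adj_iff_dist]
        exact hfe l' l (by simp [AdjF, hl']; omega)
      calc Nat.dist (f k) (f l) ≤ Nat.dist (f k) (f l') + Nat.dist (f l') (f l) :=
            Nat.dist.triangle_inequality _ _ _
        _ ≤ t + 1 := by omega
  have hlip : ∀ k l : Fin (n+1), Nat.dist (f k) (f l) ≤ Nat.dist k l := by
    intro k l
    rcases le_total (k : ℕ) (l : ℕ) with h | h
    · have := hlip0 ((l : ℕ) - (k : ℕ)) k l (by omega)
      simp [Nat.dist] at this ⊢; omega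
    · have := hlip0 ((k : ℕ) - (l : ℕ)) l k (by omega)
      simp [Nat.dist] at this ⊢; omega
  -- endpoints
  obtain ⟨a, ha⟩ := hfsurj ⟨0, by omega⟩
  obtain ⟨b, hb⟩ := hfsurj ⟨n, by omega⟩
  have hdab : Nat.dist (a : ℕ) (b : ℕ) = n := by
    have h1 := hlip a b
    rw [ha, hb] at h1
    have h2 : Nat.dist ((⟨0, by omega⟩ : Fin (n+1)) : ℕ) ((⟨n, by omega⟩ : Fin (n+1)) : ℕ) = n := by
      simp [Nat.dist]
    rw [h2] at h1
    have h3 : Nat.dist (a : ℕ) (b : ℕ) ≤ n := by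
      have := a.isLt; have := b.isLt; simp [Nat.dist]; omega
    omega
  -- f is id or reversal on values
  have hval : (∀ x : Fin (n+1), (f x : ℕ) = (x : ℕ)) ∨ (∀ x : Fin (n+1), (f x : ℕ) = n - (x : ℕ)) := by
    have hav := a.isLt; have hbv := b.isLt
    have hcases : ((a:ℕ) = 0 ∧ (b:ℕ) = n) ∨ ((a:ℕ) = n ∧ (b:ℕ) = 0) := by
      simp [Nat.dist] at hdab; omega
    rcases hcases with ⟨ha0, hbn⟩ | ⟨han, hb0⟩
    · left; intro x
      have h1 := hlip x a
      have h2 := hlip x b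
      rw [ha] at h1; rw [hb] at h2
      have := x.isLt; have := (f x).isLt
      simp [Nat.dist] at h1 h2 ⊢; omega
    · right; intro x
      have h1 := hlip x a
      have h2 := hlip x b
      rw [ha] at h1; rw [hb] at h2
      have := x.isLt; have := (f x).isLt
      simp [Nat.dist] at h1 h2 ⊢; omega
  have hff : ∀ x, f (f x) = x := by
    intro x
    rcases hval with h | h
    · exact Fin.ext (by rw [h, h])
    · refine Fin.ext ?_
      rw [h, h]
      have := x.isLt; omega
  have hmor : IsMorRel R := ⟨hedge, hsurj, fun i => ⟨s i, hs i⟩⟩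
  have hSmor : IsMorRel (fun (k i : Fin (n+1)) => f i = k) := by
    refine ⟨?_, ?_, ?_⟩
    · intro i j k l h1 h2 h3
      have h1' : f k = i := h1
      have h3' : f l = j := h3
      subst h1'; subst h3'
      exact hfe k l h2
    · intro k; exact ⟨f k, rfl⟩
    · intro i
      refine ⟨f i, fun i' => ?_⟩
      show f (f i) = i' ↔ i' = i
      rw [hff i]; exact eq_comm
  refine ⟨hmor, ?_⟩
  refine ⟨fun k i => f i = k, hSmor, ?_, ?_⟩
  · intro a c
    constructor
    · rintro ⟨b, h1, h2⟩
      rw [(hfc b a : R a b ↔ _)] at h1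
      have h2' : f c = b := h2
      rw [h1, ← h2', hff]
    · intro h; subst h
      exact ⟨f a, (hfc (f a) a).mpr (hff a).symm, rfl⟩
  · intro a c
    constructor
    · rintro ⟨b, h1, h2⟩
      have h1' : f b = a := h1
      rw [(hfc c b : R b c ↔ _)] at h2
      rw [← h1', h2, hff]
    · intro h; subst h
      exact ⟨f a, hff a, (hfc a (f a)).mpr rfl⟩

lemma morrel_lt {m n : ℕ} {R : Fin (n + 1) → Fin (m + 1) → Prop}
    (hR : IsMorRel R) (hni : ¬ IsIsoRel R) : n < m := by
  have := morrel_card_le hR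
  rcases lt_or_eq_of_le this with h | h
  · exact h
  · exact absurd (morrel_iso_of_le hR (le_of_eq h.symm)) hni

end PathCat

namespace PathCat

/-- Transport a relation along equalities of path lengths. -/
def vrel {m n m' n' : ℕ} (hn : n' = n) (hm : m' = m)
    (R : Fin (n + 1) → Fin (m + 1) → Prop) : Fin (n' + 1) → Fin (m' + 1) → Prop :=
  fun a b => R ⟨a.1, hn ▸ a.isLt⟩ ⟨b.1, hm ▸ b.isLt⟩

lemma vrel_prime {m n m' n' : ℕ} (hn : n' = n) (hm : m' = m)
    {R : Fin (n + 1) → Fin (m + 1) → Prop} (h : IsPrimeRel R) :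
    IsPrimeRel (vrel hn hm R) := by
  subst hn; subst hm; exact h

lemma vrel_iff {m n m' n' : ℕ} (hn : n' = n) (hm : m' = m)
    (R : Fin (n + 1) → Fin (m + 1) → Prop) (a : Fin (n' + 1)) (b : Fin (m' + 1))
    (a' : Fin (n + 1)) (b' : Fin (m + 1)) (ha : (a : ℕ) = a') (hb : (b : ℕ) = b') :
    vrel hn hm R a b ↔ R a' b' := by
  subst hn; subst hm
  have : a = a' := Fin.ext ha
  have hb2 : b = b' := Fin.ext hb
  subst this; subst hb2
  rfl

/-- Two chains with equal length data and val-equivalent relations have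
val-equivalent composites. -/
lemma chain_ext : ∀ (j : ℕ) (d d' : ℕ → ℕ)
    (F : ∀ i : ℕ, Fin (d (i + 1) + 1) → Fin (d i + 1) → Prop)
    (F' : ∀ i : ℕ, Fin (d' (i + 1) + 1) → Fin (d' i + 1) → Prop),
    (∀ i, i ≤ j → d' i = d i) →
    (∀ i, i < j → ∀ (a : Fin (d' (i+1) + 1)) (b : Fin (d' i + 1))
      (a' : Fin (d (i+1) + 1)) (b' : Fin (d i + 1)),
      (a : ℕ) = a' → (b : ℕ) = b' → (F' i a b ↔ F i a' b')) →
    ∀ (a : Fin (d' j + 1)) (c : Fin (d' 0 + 1)) (a' : Fin (d j + 1)) (c' : Fin (d 0 + 1)),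
      (a : ℕ) = a' → (c : ℕ) = c' →
      (chainComp d' F' j a c ↔ chainComp d F j a' c') := by
  intro j
  induction j with
  | zero =>
    intro d d' F F' hd hF a c a' c' ha hc
    show a = c ↔ a' = c'
    constructor
    · intro h; subst h; exact Fin.ext (by rw [← ha, ← hc])
    · intro h; subst h; exact Fin.ext (by rw [ha, hc])
  | succ j ih =>
    intro d d' F F' hd hF a c a' c' ha hc
    show (∃ b, F' j a b ∧ chainComp d' F' j b c) ↔ ∃ b, F j a' b ∧ chainComp d F j b c'
    constructor
    · rintro ⟨b, h1, h2⟩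
      refine ⟨⟨b.1, by have hb := b.isLt; have he := hd j (by omega); omega⟩, ?_, ?_⟩
      · exact (hF j (by omega) a b _ _ ha rfl).mp h1
      · exact (ih d d' F F' (fun i hi => hd i (by omega)) (fun i hi => hF i (by omega))
          b c _ c' rfl hc).mp h2
    · rintro ⟨b, h1, h2⟩
      refine ⟨⟨b.1, by have hb := b.isLt; have he := hd j (by omega); omega⟩, ?_, ?_⟩
      · exact (hF j (by omega) a _ a' b ha rfl).mpr h1
      · exact (ih d d' F F' (fun i hi => hd i (by omega)) (fun i hi => hF i (by omega))
          _ c b c' rfl hc).mpr h2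

/-- The conclusion of the theorem, as a predicate. -/
def Chainable {m n : ℕ} (R : Fin (n + 1) → Fin (m + 1) → Prop) : Prop :=
  ∃ (k : ℕ) (d : ℕ → ℕ) (F : ∀ i : ℕ, Fin (d (i + 1) + 1) → Fin (d i + 1) → Prop)
    (h0 : d 0 = m) (h1 : d (k + 1) = n),
    (∀ i, i ≤ k → IsPrimeRel (F i)) ∧
    ∀ (a : Fin (n + 1)) (c : Fin (m + 1)),
      R a c ↔ chainComp d F (k + 1)
        (Fin.cast (show n + 1 = d (k + 1) + 1 by rw [h1]) a)
        (Fin.cast (show m + 1 = d 0 + 1 by rw [h0]) c)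

lemma chain_single {m n : ℕ} {R : Fin (n + 1) → Fin (m + 1) → Prop}
    (h : IsPrimeRel R) : Chainable R := by
  refine ⟨0, fun i => match i with | 0 => m | _ + 1 => n,
    fun i => match i with
      | 0 => R
      | _ + 1 => fun _ _ => True,
    rfl, rfl, ?_, ?_⟩
  · intro i hi
    interval_cases i
    exact h
  · intro a c
    show R a c ↔ ∃ b, R _ b ∧ b = _
    constructor
    · intro hr
      exact ⟨Fin.cast rfl c, hr, rfl⟩
    · rintro ⟨b, h1, h2⟩
      subst h2
      exact h1

def consD (n k : ℕ) (d : ℕ → ℕ) : ℕ → ℕ := fun i => if i ≤ k + 1 then d i else n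

lemma consD_le (n k : ℕ) (d : ℕ → ℕ) {i : ℕ} (h : i ≤ k + 1) : consD n k d i = d i :=
  if_pos h

lemma consD_top (n k : ℕ) (d : ℕ → ℕ) : consD n k d (k + 1 + 1) = n :=
  if_neg (by omega)

def consF (n mid k : ℕ) (d : ℕ → ℕ) (F : ∀ i : ℕ, Fin (d (i + 1) + 1) → Fin (d i + 1) → Prop)
    (h1 : d (k + 1) = mid) (P : Fin (n + 1) → Fin (mid + 1) → Prop) :
    ∀ i : ℕ, Fin (consD n k d (i + 1) + 1) → Fin (consD n k d i + 1) → Prop :=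
  fun i =>
    if h : i ≤ k then
      vrel (consD_le n k d (by omega)) (consD_le n k d (by omega)) (F i)
    else if h2 : i = k + 1 then
      vrel (show consD n k d (i + 1) = n from by rw [h2]; exact consD_top n k d)
           (show consD n k d i = mid from by rw [h2, consD_le n k d (by omega), h1]) P
    else fun _ _ => True

lemma consF_le {n mid k : ℕ} {d : ℕ → ℕ} {F : ∀ i : ℕ, Fin (d (i + 1) + 1) → Fin (d i + 1) → Prop}
    {h1 : d (k + 1) = mid} {P : Fin (n + 1) → Fin (mid + 1) → Prop} {i : ℕ} (h : i ≤ k)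
    (a : Fin (consD n k d (i + 1) + 1)) (b : Fin (consD n k d i + 1))
    (a' : Fin (d (i + 1) + 1)) (b' : Fin (d i + 1)) (ha : (a : ℕ) = a') (hb : (b : ℕ) = b') :
    consF n mid k d F h1 P i a b ↔ F i a' b' := by
  simp only [consF]
  rw [dif_pos h]
  exact vrel_iff _ _ (F i) a b a' b' ha hb

lemma consF_top {n mid k : ℕ} {d : ℕ → ℕ} {F : ∀ i : ℕ, Fin (d (i + 1) + 1) → Fin (d i + 1) → Prop}
    {h1 : d (k + 1) = mid} {P : Fin (n + 1) → Fin (mid + 1) → Prop}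
    (a : Fin (consD n k d (k + 1 + 1) + 1)) (b : Fin (consD n k d (k + 1) + 1))
    (a' : Fin (n + 1)) (b' : Fin (mid + 1)) (ha : (a : ℕ) = a') (hb : (b : ℕ) = b') :
    consF n mid k d F h1 P (k + 1) a b ↔ P a' b' := by
  simp only [consF]
  rw [dif_neg (by omega : ¬ k + 1 ≤ k), dif_pos trivial]
  exact vrel_iff _ _ P a b a' b' ha hb

lemma consF_prime {n mid k : ℕ} {d : ℕ → ℕ} {F : ∀ i : ℕ, Fin (d (i + 1) + 1) → Fin (d i + 1) → Prop}
    {h1 : d (k + 1) = mid} {P : Fin (n + 1) → Fin (mid + 1) → Prop} {i : ℕ} (hi : i ≤ k + 1)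
    (hp : ∀ i, i ≤ k → IsPrimeRel (F i)) (hP : IsPrimeRel P) :
    IsPrimeRel (consF n mid k d F h1 P i) := by
  simp only [consF]
  by_cases h : i ≤ k
  · rw [dif_pos h]
    exact vrel_prime _ _ (hp i h)
  · rw [dif_neg h, dif_pos (by omega : i = k + 1)]
    exact vrel_prime _ _ hP

lemma chain_cons {m mid n : ℕ} {P : Fin (n + 1) → Fin (mid + 1) → Prop}
    {S : Fin (mid + 1) → Fin (m + 1) → Prop} {R : Fin (n + 1) → Fin (m + 1) → Prop}
    (hP : IsPrimeRel P) (hS : Chainable S) (hR : ∀ a c, R a c ↔ compRel P S a c) :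
    Chainable R := by
  obtain ⟨k, d, F, h0, h1, hp, hc⟩ := hS
  have hext : ∀ (b : Fin (consD n k d (k + 1) + 1)) (c : Fin (consD n k d 0 + 1))
      (b' : Fin (d (k + 1) + 1)) (c' : Fin (d 0 + 1)), (b : ℕ) = b' → (c : ℕ) = c' →
      (chainComp (consD n k d) (consF n mid k d F h1 P) (k + 1) b c ↔ chainComp d F (k + 1) b' c') := by
    intro b c b' c' hb hcc
    exact chain_ext (k + 1) d (consD n k d) F (consF n mid k d F h1 P)
      (fun i hi => consD_le n k d hi)
      (fun i hi a2 b2 a2' b2' ha2 hb2 => consF_le (by omega) a2 b2 a2' b2' ha2 hb2)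
      b c b' c' hb hcc
  refine ⟨k + 1, consD n k d, consF n mid k d F h1 P,
    by rw [consD_le n k d (by omega), h0], consD_top n k d, ?_, ?_⟩
  · intro i hi
    exact consF_prime hi hp hP
  · intro a c
    rw [hR a c]
    show compRel P S a c ↔ ∃ b, _ ∧ _
    constructor
    · rintro ⟨b, hab, hbc⟩
      have hblt : (b : ℕ) < consD n k d (k + 1) + 1 := by
        rw [consD_le n k d (by omega), h1]; exact b.isLt
      refine ⟨⟨b.1, hblt⟩, ?_, ?_⟩
      · refine (consF_top _ _ a b rfl rfl).mpr hab
      · rw [hc b c] at hbc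
        exact (hext _ _ _ _ rfl rfl).mpr hbc
    · rintro ⟨b, hab, hbc⟩
      have hbm : b.1 < mid + 1 := by
        have hb : (b : ℕ) < consD n k d (k + 1) + 1 := b.isLt
        have he : consD n k d (k + 1) = mid := by rw [consD_le n k d (by omega), h1]
        omega
      refine ⟨⟨b.1, hbm⟩, ?_, ?_⟩
      · exact (consF_top _ _ a ⟨b.1, hbm⟩ rfl rfl).mp hab
      · rw [hc ⟨b.1, hbm⟩ c]
        exact (hext _ _ _ _ rfl rfl).mp hbc

end PathCat

namespace PathCat

/-- Being an (iterated) composition of primes, as an inductive predicate. -/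
inductive PC : ∀ {m n : ℕ}, (Fin (n + 1) → Fin (m + 1) → Prop) → Prop where
  | prime {m n : ℕ} {R : Fin (n + 1) → Fin (m + 1) → Prop} : IsPrimeRel R → PC R
  | cons {m mid n : ℕ} {P : Fin (n + 1) → Fin (mid + 1) → Prop}
      {S : Fin (mid + 1) → Fin (m + 1) → Prop} {R : Fin (n + 1) → Fin (m + 1) → Prop} :
      IsPrimeRel P → PC S → (∀ a c, R a c ↔ compRel P S a c) → PC R

lemma PC.comp : ∀ {m n : ℕ} {S : Fin (n + 1) → Fin (m + 1) → Prop}, PC S →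
    ∀ {m' : ℕ} (T : Fin (m + 1) → Fin (m' + 1) → Prop)
      (R : Fin (n + 1) → Fin (m' + 1) → Prop), PC T →
      (∀ a c, R a c ↔ compRel S T a c) → PC R := by
  intro m n S hS
  induction hS with
  | prime h =>
    intro m' T R hT hR
    exact PC.cons h hT hR
  | cons hP hS0 hSeq ih =>
    intro m' T R hT hR
    refine PC.cons hP (ih T _ hT (fun a c => Iff.rfl)) ?_
    intro a c
    rw [hR a c]
    constructor
    · rintro ⟨b, h1, h2⟩
      obtain ⟨e, he1, he2⟩ := (hSeq a b).mp h1
      exact ⟨e, he1, b, he2, h2⟩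
    · rintro ⟨e, he1, b, he2, h2⟩
      exact ⟨b, (hSeq a b).mpr ⟨e, he1, he2⟩, h2⟩

lemma PC.chainable : ∀ {m n : ℕ} {R : Fin (n + 1) → Fin (m + 1) → Prop}, PC R → Chainable R := by
  intro m n R h
  induction h with
  | prime h => exact chain_single h
  | cons hP _ hR ih => exact chain_cons hP ih hR

lemma main_pc : ∀ (g m n : ℕ) (R : Fin (n + 1) → Fin (m + 1) → Prop),
    m - n ≤ g → IsMorRel R → ¬ IsIsoRel R → PC R := by
  intro g
  induction g with
  | zero =>
    intro m n R hg hR hni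
    have := morrel_lt hR hni
    omega
  | succ g ih =>
    intro m n R hg hR hni
    have hlt := morrel_lt hR hni
    by_cases hprime : IsPrimeRel R
    · exact PC.prime hprime
    · rw [IsPrimeRel] at hprime
      push_neg at hprime
      obtain ⟨k, S, T, hS, hT, heq, hniS, hniT⟩ := hprime hR hni
      have hnk := morrel_lt hS hniS
      have hkm := morrel_lt hT hniT
      have hPCS : PC S := ih k n S (by omega) hS hniS
      have hPCT : PC T := ih m k T (by omega) hT hniT
      exact hPCS.comp T R hPCT heq

end PathCat

open PathCat in
/-- Every non-isomorphism in the category of finite paths is a finite composition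
of prime morphisms. -/
theorem stmt14 {m n : ℕ} (R : Fin (n + 1) → Fin (m + 1) → Prop)
    (hR : IsMorRel R) (hni : ¬ IsIsoRel R) :
    ∃ (k : ℕ) (d : ℕ → ℕ) (F : ∀ i : ℕ, Fin (d (i + 1) + 1) → Fin (d i + 1) → Prop)
      (h0 : d 0 = m) (h1 : d (k + 1) = n),
      (∀ i, i ≤ k → IsPrimeRel (F i)) ∧
      ∀ (a : Fin (n + 1)) (c : Fin (m + 1)),
        R a c ↔ chainComp d F (k + 1)
          (Fin.cast (show n + 1 = d (k + 1) + 1 by rw [h1]) a)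
          (Fin.cast (show m + 1 = d 0 + 1 by rw [h0]) c) := by
  exact (main_pc (m - n) m n R le_rfl hR hni).chainable
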